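/- Let W : (X^n)^T → Q × [T] be an (ε, δ)-max-KL stable algorithm where Q is the class of statistical queries q : X → [0,1]. Let P be a distribution on X and X = (S_1, ..., S_T) consist of T independent samples each of n i.i.d. draws from P. Then |E[q(P) | (q,t) = W(X)] − E[q(S_t) | (q,t) = W(X)]| ≤ e^ε − 1 + Tδ. -/

import Mathlib

open MeasureTheory

/-- Two collections of `T` datasets of size `n` are neighboring if they differ
in at most one entry of one dataset. -/
def NeighboringMulti {X : Type*} {n T : ℕ} (x x' : Fin T → Fin n → X) : Prop :=
  ∃ t : Fin T, ∃ i : Fin n, ∀ t' : Fin T, ∀ i' : Fin n,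
    (t', i') ≠ (t, i) → x t' i' = x' t' i'


lemma aux_integrable01 {α : Type*} [MeasurableSpace α] {μ : Measure α} [IsFiniteMeasure μ]
    {f : α → ℝ} (hf : AEStronglyMeasurable f μ) (h0 : ∀ a, 0 ≤ f a) (h1 : ∀ a, f a ≤ 1) :
    Integrable f μ :=
  Integrable.mono' (integrable_const 1) hf
    (Filter.Eventually.of_forall fun a => by
      rw [Real.norm_eq_abs, abs_le]; exact ⟨by linarith [h0 a], h1 a⟩)

lemma aux_integral_le_one {α : Type*} [MeasurableSpace α] {μ : Measure α} [IsProbabilityMeasure μ]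
    {f : α → ℝ} (hf : Integrable f μ) (h1 : ∀ a, f a ≤ 1) : ∫ a, f a ∂μ ≤ 1 := by
  calc ∫ a, f a ∂μ ≤ ∫ _, (1:ℝ) ∂μ := integral_mono hf (integrable_const 1) h1
  _ = 1 := by simp

lemma aux_comp_integral_eq {α : Type*} [MeasurableSpace α] {m : Measure α} {σ : α → α}
    (h : MeasurePreserving σ m m) {f : α → ℝ} (hf : AEStronglyMeasurable f m) :
    ∫ a, f (σ a) ∂m = ∫ a, f a ∂m := by
  rw [← integral_map h.aemeasurable (by rwa [h.map_eq]), h.map_eq]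
lemma aux_fstab {Ω : Type*} [MeasurableSpace Ω] (μ1 μ2 : Measure Ω)
    [IsProbabilityMeasure μ1] [IsProbabilityMeasure μ2] {ε δ : ℝ} (hδ : 0 ≤ δ)
    (hs : ∀ S : Set Ω, MeasurableSet S → (μ1 S).toReal ≤ Real.exp ε * (μ2 S).toReal + δ)
    {g : Ω → ℝ} (hg : Measurable g) (h0 : ∀ ω, 0 ≤ g ω) (h1 : ∀ ω, g ω ≤ 1) :
    ∫ ω, g ω ∂μ1 ≤ Real.exp ε * ∫ ω, g ω ∂μ2 + δ := by
  have hexp : (0:ℝ) < Real.exp ε := Real.exp_pos ε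
  have hFmeas : ∀ (μ : Measure Ω), Measurable (fun s : ℝ => (μ {a | s < g a}).toReal) := by
    intro μ
    refine Measurable.ennreal_toReal (Antitone.measurable fun u v huv => ?_)
    exact measure_mono fun a ha => lt_of_le_of_lt huv ha
  have hFle : ∀ (μ : Measure Ω), IsProbabilityMeasure μ → ∀ s, (μ {a | s < g a}).toReal ≤ 1 := by
    intro μ hμ s
    rw [← ENNReal.toReal_one]
    exact ENNReal.toReal_mono (by simp) prob_le_one
  have hF0 : ∀ (μ : Measure Ω), ∀ s, 0 ≤ (μ {a | s < g a}).toReal := fun _ _ => ENNReal.toReal_nonneg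
  have hFzero : ∀ (μ : Measure Ω), ∀ s : ℝ, 1 ≤ s → (μ {a | s < g a}).toReal = 0 := by
    intro μ s hsone
    have : {a | s < g a} = (∅ : Set Ω) := by
      ext a; simp only [Set.mem_setOf_eq, Set.mem_empty_iff_false, iff_false, not_lt]
      exact (h1 a).trans hsone
    simp [this]
  have hconstind : Integrable ((Set.Ioc (0:ℝ) 1).indicator (fun _ => (1:ℝ)))
      (volume.restrict (Set.Ioi (0:ℝ))) :=
    (((integrable_indicator_iff measurableSet_Ioc).mpr
      (integrableOn_const measure_Ioc_lt_top.ne))).restrict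
  have hFint : ∀ (μ : Measure Ω), IsProbabilityMeasure μ →
      IntegrableOn (fun s : ℝ => (μ {a | s < g a}).toReal) (Set.Ioi 0) := by
    intro μ hμ
    refine Integrable.mono' hconstind ((hFmeas μ).aestronglyMeasurable) ?_
    refine (ae_restrict_iff' measurableSet_Ioi).mpr (Filter.Eventually.of_forall fun s hsmem => ?_)
    rw [Real.norm_eq_abs, abs_of_nonneg (hF0 μ s)]
    by_cases hsle : s ≤ 1
    · rw [Set.indicator_of_mem (Set.mem_Ioc.mpr ⟨hsmem, hsle⟩)]
      exact hFle μ hμ s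
    · rw [Set.indicator_of_notMem (fun h => hsle h.2), hFzero μ s (le_of_not_ge hsle)]
  have hint1 : Integrable g μ1 := aux_integrable01 hg.aestronglyMeasurable h0 h1
  have hint2 : Integrable g μ2 := aux_integrable01 hg.aestronglyMeasurable h0 h1
  rw [hint1.integral_eq_integral_meas_lt (Filter.Eventually.of_forall h0),
      hint2.integral_eq_integral_meas_lt (Filter.Eventually.of_forall h0)]
  have hind2 : Integrable
      ((Set.Ioc (0:ℝ) 1).indicator (fun s => Real.exp ε * (μ2 {a | s < g a}).toReal + δ))
      (volume.restrict (Set.Ioi (0:ℝ))) := by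
    refine Integrable.mono' (hconstind.const_mul (Real.exp ε + δ))
      (((((hFmeas μ2).const_mul _).add measurable_const).indicator
        measurableSet_Ioc).aestronglyMeasurable) ?_
    refine Filter.Eventually.of_forall fun s => ?_
    rw [Real.norm_eq_abs]
    by_cases hsmem : s ∈ Set.Ioc (0:ℝ) 1
    · rw [Set.indicator_of_mem hsmem, Set.indicator_of_mem hsmem]
      rw [abs_of_nonneg (by positivity)]
      have := hFle μ2 ‹_› s
      have := hF0 μ2 s
      nlinarith
    · rw [Set.indicator_of_notMem hsmem, Set.indicator_of_notMem hsmem]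
      simpa using mul_nonneg (le_of_lt (by positivity : (0:ℝ) < Real.exp ε + δ))
        (Set.indicator_apply_nonneg (fun _ => zero_le_one) (a := s))
  have step1 : ∫ s in Set.Ioi 0, (μ1 {a | s < g a}).toReal ≤
      ∫ s in Set.Ioi 0,
        (Set.Ioc (0:ℝ) 1).indicator (fun s => Real.exp ε * (μ2 {a | s < g a}).toReal + δ) s := by
    refine setIntegral_mono_on (hFint μ1 ‹_›) hind2 measurableSet_Ioi fun s hsmem => ?_
    by_cases hsle : s ≤ 1
    · rw [Set.indicator_of_mem (Set.mem_Ioc.mpr ⟨hsmem, hsle⟩)]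
      exact hs _ (hg measurableSet_Ioi)
    · rw [Set.indicator_of_notMem (fun h => hsle h.2), hFzero μ1 s (le_of_not_ge hsle)]
  refine step1.trans ?_
  have hIocsub : Set.Ioc (0:ℝ) 1 ∩ Set.Ioi (0:ℝ) = Set.Ioc (0:ℝ) 1 := by
    ext s; simp only [Set.mem_inter_iff, Set.mem_Ioc, Set.mem_Ioi, and_iff_left_iff_imp]
    exact fun h => h.1
  rw [integral_indicator measurableSet_Ioc, Measure.restrict_restrict measurableSet_Ioc, hIocsub]
  have hintIoc : IntegrableOn (fun s : ℝ => (μ2 {a | s < g a}).toReal) (Set.Ioc 0 1) :=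
    (hFint μ2 ‹_›).mono_set Set.Ioc_subset_Ioi_self
  rw [integral_add (hintIoc.const_mul _) (integrable_const δ), integral_const]
  simp only [MeasurableSet.univ, Measure.restrict_apply, Set.univ_inter, Real.volume_Ioc,
    smul_eq_mul]
  have hvol : (volume.restrict (Set.Ioc (0:ℝ) 1)).real Set.univ = 1 := by simp
  rw [integral_const_mul, hvol, one_mul]
  gcongr
  exact setIntegral_mono_set (hFint μ2 ‹_›) (Filter.Eventually.of_forall (hF0 μ2))
    (Filter.Eventually.of_forall fun s h => Set.Ioc_subset_Ioi_self h)
lemma aux_piFinSuccAbove_apply {α : Type*} [MeasurableSpace α] {k : ℕ} (j : Fin (k+1))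
    (f : Fin (k+1) → α) :
    (MeasurableEquiv.piFinSuccAbove (fun _ : Fin (k+1) => α) j) f = (f j, j.removeNth f) := rfl

lemma aux_removeNth_update {α : Type*} {k : ℕ} (j : Fin (k+1)) (f : Fin (k+1) → α) (v : α) :
    j.removeNth (Function.update f j v) = j.removeNth f := by
  funext l
  exact Function.update_of_ne (Fin.succAbove_ne j l) _ _

lemma aux_piFinSuccAbove_symm_update {α : Type*} [MeasurableSpace α] {k : ℕ} (j : Fin (k+1))
    (f : Fin (k+1) → α) (v : α) :
    (MeasurableEquiv.piFinSuccAbove (fun _ : Fin (k+1) => α) j).symm (v, j.removeNth f)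
      = Function.update f j v := by
  have h : (MeasurableEquiv.piFinSuccAbove (fun _ : Fin (k+1) => α) j) (Function.update f j v)
      = (v, j.removeNth f) := by
    rw [aux_piFinSuccAbove_apply, Function.update_self, aux_removeNth_update]
  rw [← h, MeasurableEquiv.symm_apply_apply]

lemma aux_swap_mp {X : Type*} [MeasurableSpace X] (P : Measure X) [IsProbabilityMeasure P]
    {Tk nk : ℕ} (t : Fin (Tk+1)) (i : Fin (nk+1)) :
    MeasurePreserving
      (fun p : (Fin (Tk+1) → Fin (nk+1) → X) × X =>
        (Function.update p.1 t (Function.update (p.1 t) i p.2), p.1 t i))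
      ((Measure.pi fun _ : Fin (Tk+1) => Measure.pi fun _ : Fin (nk+1) => P).prod P)
      ((Measure.pi fun _ : Fin (Tk+1) => Measure.pi fun _ : Fin (nk+1) => P).prod P) := by
  set ν : Measure (Fin (nk+1) → X) := Measure.pi fun _ => P with hν
  set μ : Measure (Fin (Tk+1) → Fin (nk+1) → X) := Measure.pi fun _ => ν with hμ
  set Pw : Measure (Fin nk → X) := Measure.pi fun _ => P with hPw
  set μr : Measure (Fin Tk → Fin (nk+1) → X) := Measure.pi fun _ => ν with hμr
  set e1 : (Fin (Tk+1) → Fin (nk+1) → X) ≃ᵐ (Fin (nk+1) → X) × (Fin Tk → Fin (nk+1) → X) :=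
    MeasurableEquiv.piFinSuccAbove (fun _ => Fin (nk+1) → X) t with he1def
  set e2 : (Fin (nk+1) → X) ≃ᵐ X × (Fin nk → X) :=
    MeasurableEquiv.piFinSuccAbove (fun _ => X) i with he2def
  have he1 : MeasurePreserving e1 μ (ν.prod μr) := measurePreserving_piFinSuccAbove (fun _ => ν) t
  have he2 : MeasurePreserving e2 ν (P.prod Pw) := measurePreserving_piFinSuccAbove (fun _ => P) i
  have h1 : MeasurePreserving (Prod.map (⇑e1) (id : X → X)) (μ.prod P) ((ν.prod μr).prod P) :=
    he1.prod (MeasurePreserving.id P)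
  have h2 : MeasurePreserving (Prod.map (Prod.map (⇑e2) id) (id : X → X))
      ((ν.prod μr).prod P) (((P.prod Pw).prod μr).prod P) :=
    (he2.prod (MeasurePreserving.id μr)).prod (MeasurePreserving.id P)
  have h3 : MeasurePreserving (Prod.map (⇑(MeasurableEquiv.prodAssoc (α := X) (β := Fin nk → X)
        (γ := Fin Tk → Fin (nk+1) → X))) (id : X → X))
      (((P.prod Pw).prod μr).prod P) ((P.prod (Pw.prod μr)).prod P) :=
    (measurePreserving_prodAssoc P Pw μr).prod (MeasurePreserving.id P)
  have h4 : MeasurePreserving (⇑(MeasurableEquiv.prodAssoc (α := X) (β := (Fin nk → X) × (Fin Tk → Fin (nk+1) → X)) (γ := X)))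
      ((P.prod (Pw.prod μr)).prod P) (P.prod ((Pw.prod μr).prod P)) :=
    measurePreserving_prodAssoc P (Pw.prod μr) P
  have h5 : MeasurePreserving (Prod.swap (α := X) (β := ((Fin nk → X) × (Fin Tk → Fin (nk+1) → X)) × X))
      (P.prod ((Pw.prod μr).prod P)) (((Pw.prod μr).prod P).prod P) :=
    Measure.measurePreserving_swap
  have h6 : MeasurePreserving (Prod.map (Prod.swap (α := (Fin nk → X) × (Fin Tk → Fin (nk+1) → X)) (β := X)) (id : X → X))
      (((Pw.prod μr).prod P).prod P) ((P.prod (Pw.prod μr)).prod P) :=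
    Measure.measurePreserving_swap.prod (MeasurePreserving.id P)
  have h7 : MeasurePreserving (Prod.map (⇑(MeasurableEquiv.prodAssoc (α := X) (β := Fin nk → X)
        (γ := Fin Tk → Fin (nk+1) → X)).symm) (id : X → X))
      ((P.prod (Pw.prod μr)).prod P) (((P.prod Pw).prod μr).prod P) :=
    ((measurePreserving_prodAssoc P Pw μr).symm _).prod (MeasurePreserving.id P)
  have h8 : MeasurePreserving (Prod.map (Prod.map (⇑e2.symm) id) (id : X → X))
      (((P.prod Pw).prod μr).prod P) ((ν.prod μr).prod P) :=
    ((he2.symm e2).prod (MeasurePreserving.id μr)).prod (MeasurePreserving.id P)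
  have h9 : MeasurePreserving (Prod.map (⇑e1.symm) (id : X → X)) ((ν.prod μr).prod P) (μ.prod P) :=
    (he1.symm e1).prod (MeasurePreserving.id P)
  have hcomp := ((((((((h9.comp h8).comp h7).comp h6).comp h5).comp h4).comp h3).comp h2).comp h1)
  convert hcomp using 1
  funext p
  obtain ⟨x, z⟩ := p
  simp only [Function.comp_apply, Prod.map_apply, id_eq, Prod.swap_prod_mk,
    MeasurableEquiv.prodAssoc, MeasurableEquiv.coe_mk, Equiv.prodAssoc_apply,
    Equiv.prodAssoc_symm_apply, MeasurableEquiv.symm_mk]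
  have hx2 : (Prod.map (⇑e2) id (e1 x) : (X × (Fin nk → X)) × (Fin Tk → Fin (nk+1) → X))
      = ((x t i, i.removeNth (x t)), t.removeNth x) := rfl
  rw [hx2, aux_piFinSuccAbove_symm_update i (x t) z, aux_piFinSuccAbove_symm_update t x _]

open ProbabilityTheory in
lemma aux_main
    {X Q : Type*} [MeasurableSpace X] [MeasurableSpace Q] {nk Tk : ℕ}
    (P : Measure X) [IsProbabilityMeasure P]
    (W : (Fin (Tk+1) → Fin (nk+1) → X) → Measure (Q × Fin (Tk+1)))
    (hWprob : ∀ x, IsProbabilityMeasure (W x)) (hWmeas : Measurable W)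
    (eval : Q → X → ℝ) (hmeas : Measurable fun p : Q × X => eval p.1 p.2)
    (hrange : ∀ q z, eval q z ∈ Set.Icc (0 : ℝ) 1)
    (ε δ : ℝ) (hε : 0 ≤ ε) (hδ : 0 ≤ δ)
    (hstable : ∀ x x', (∃ t : Fin (Tk+1), ∃ i : Fin (nk+1), ∀ t', ∀ i',
        (t', i') ≠ (t, i) → x t' i' = x' t' i') →
      ∀ S : Set (Q × Fin (Tk+1)), MeasurableSet S →
        ((W x) S).toReal ≤ Real.exp ε * ((W x') S).toReal + δ) :
    |(∫ x, ∫ qt : Q × Fin (Tk+1), (∫ z, eval qt.1 z ∂P) ∂(W x)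
        ∂(Measure.pi fun _ : Fin (Tk+1) => Measure.pi fun _ : Fin (nk+1) => P)) -
      (∫ x, ∫ qt : Q × Fin (Tk+1), (((nk+1 : ℕ) : ℝ)⁻¹ * ∑ i : Fin (nk+1), eval qt.1 (x qt.2 i)) ∂(W x)
        ∂(Measure.pi fun _ : Fin (Tk+1) => Measure.pi fun _ : Fin (nk+1) => P))|
      ≤ Real.exp ε - 1 + (Tk+1) * δ := by
  haveI hWP := hWprob
  set μ : Measure (Fin (Tk+1) → Fin (nk+1) → X) :=
    Measure.pi fun _ => Measure.pi fun _ => P with hμdef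
  haveI : IsProbabilityMeasure μ := by rw [hμdef]; infer_instance
  set ρ : Measure ((Fin (Tk+1) → Fin (nk+1) → X) × X) := μ.prod P with hρdef
  haveI : IsProbabilityMeasure ρ := by rw [hρdef]; infer_instance
  set κ : Kernel (Fin (Tk+1) → Fin (nk+1) → X) (Q × Fin (Tk+1)) := ⟨W, hWmeas⟩ with hκdef
  haveI : IsMarkovKernel κ := ⟨hWprob⟩
  -- basic bounds on eval
  have he0 : ∀ q z, 0 ≤ eval q z := fun q z => (hrange q z).1
  have he1 : ∀ q z, eval q z ≤ 1 := fun q z => (hrange q z).2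
  -- the indicator-restricted evaluation functions
  have hgmeas : ∀ t : Fin (Tk+1), Measurable fun r : (Q × Fin (Tk+1)) × X =>
      (if r.1.2 = t then eval r.1.1 r.2 else 0 : ℝ) := by
    intro t
    exact Measurable.ite (measurable_fst.snd (measurableSet_singleton t))
      (hmeas.comp (measurable_fst.fst.prodMk measurable_snd)) measurable_const
  have hgmeas' : ∀ (t : Fin (Tk+1)) (u : X), Measurable fun qt : Q × Fin (Tk+1) =>
      (if qt.2 = t then eval qt.1 u else 0 : ℝ) := fun t u =>
    (hgmeas t).comp (measurable_id.prodMk measurable_const)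
  have hg0 : ∀ (t : Fin (Tk+1)) (qt : Q × Fin (Tk+1)) (u : X),
      (0:ℝ) ≤ (if qt.2 = t then eval qt.1 u else 0) := by
    intro t qt u; split <;> simp [he0]
  have hg1 : ∀ (t : Fin (Tk+1)) (qt : Q × Fin (Tk+1)) (u : X),
      (if qt.2 = t then eval qt.1 u else 0 : ℝ) ≤ 1 := by
    intro t qt u; split
    · exact he1 _ _
    · exact zero_le_one
  -- integrability over W x
  have hWint : ∀ (x) {F : (Q × Fin (Tk+1)) → ℝ}, Measurable F → (∀ qt, 0 ≤ F qt) →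
      (∀ qt, F qt ≤ 1) → Integrable F (W x) := fun x _ hF h0 h1 =>
    aux_integrable01 hF.aestronglyMeasurable h0 h1
  -- the de-correlated evaluation kernels
  set M : Fin (Tk+1) → ((Fin (Tk+1) → Fin (nk+1) → X) × X) → ℝ :=
    fun t p => ∫ qt, (if qt.2 = t then eval qt.1 p.2 else 0 : ℝ) ∂(W p.1) with hMdef
  have hM0 : ∀ t p, 0 ≤ M t p := fun t p => integral_nonneg (fun qt => hg0 t qt p.2)
  have hM1 : ∀ t p, M t p ≤ 1 := fun t p =>
    aux_integral_le_one (hWint p.1 (hgmeas' t p.2) (fun qt => hg0 t qt p.2) (fun qt => hg1 t qt p.2))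
      (fun qt => hg1 t qt p.2)
  have hMsm : ∀ t, StronglyMeasurable (M t) := by
    intro t
    have hf : Measurable fun r : ((Fin (Tk+1) → Fin (nk+1) → X) × X) × (Q × Fin (Tk+1)) =>
        (if r.2.2 = t then eval r.2.1 r.1.2 else 0 : ℝ) :=
      Measurable.ite (measurable_snd.snd (measurableSet_singleton t))
        (hmeas.comp (measurable_snd.fst.prodMk measurable_fst.snd)) measurable_const
    have := hf.stronglyMeasurable.integral_kernel_prod_right'
      (κ := κ.comap Prod.fst measurable_fst)
    simpa [hMdef, Kernel.comap_apply, hκdef] using this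
  have hMmeas : ∀ t, Measurable (M t) := fun t => (hMsm t).measurable
  have hMint : ∀ t, Integrable (M t) ρ := fun t =>
    aux_integrable01 (hMmeas t).aestronglyMeasurable (hM0 t) (hM1 t)
  -- the conditional expectation of the true statistical query value
  have hcmeas : Measurable fun q : Q => ∫ z, eval q z ∂P :=
    (StronglyMeasurable.integral_prod_right' (hmeas.stronglyMeasurable)).measurable
  have hc0 : ∀ q, 0 ≤ ∫ z, eval q z ∂P := fun q => integral_nonneg (he0 q)
  have hevalint : ∀ q, Integrable (fun z => eval q z) P := fun q =>
    aux_integrable01 ((hmeas.comp (measurable_const.prodMk measurable_id)).aestronglyMeasurable)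
      (he0 q) (he1 q)
  have hc1 : ∀ q, (∫ z, eval q z ∂P) ≤ 1 := fun q => aux_integral_le_one (hevalint q) (he1 q)
  -- update map and its measurability
  have hupd : ∀ (t : Fin (Tk+1)) (i : Fin (nk+1)),
      Measurable fun p : (Fin (Tk+1) → Fin (nk+1) → X) × X =>
        Function.update p.1 t (Function.update (p.1 t) i p.2) := by
    intro t i
    refine measurable_pi_lambda _ fun t' => ?_
    rcases eq_or_ne t' t with rfl | hne
    · simp only [Function.update_self]
      refine measurable_pi_lambda _ fun i' => ?_
      rcases eq_or_ne i' i with rfl | hne'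
      · simpa only [Function.update_self] using measurable_snd
      · simp only [Function.update_of_ne hne']
        exact (measurable_pi_apply i').comp ((measurable_pi_apply t').comp measurable_fst)
    · simp only [Function.update_of_ne hne]
      exact (measurable_pi_apply t').comp measurable_fst
  -- neighboring property of the update
  have hnbr : ∀ (t : Fin (Tk+1)) (i : Fin (nk+1)) (p : (Fin (Tk+1) → Fin (nk+1) → X) × X),
      ∃ t₀, ∃ i₀, ∀ t', ∀ i', (t', i') ≠ (t₀, i₀) →
        (Function.update p.1 t (Function.update (p.1 t) i p.2)) t' i' = p.1 t' i' := by
    intro t i p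
    refine ⟨t, i, fun t' i' hne => ?_⟩
    rcases eq_or_ne t' t with rfl | hne'
    · have hii : i' ≠ i := fun h => hne (by rw [h])
      rw [Function.update_self, Function.update_of_ne hii]
    · rw [Function.update_of_ne hne']
  -- the two stability estimates, pointwise
  have hstab1 : ∀ (t : Fin (Tk+1)) (i : Fin (nk+1)) (p : (Fin (Tk+1) → Fin (nk+1) → X) × X)
      (u : X),
      M t (Function.update p.1 t (Function.update (p.1 t) i p.2), u)
        ≤ Real.exp ε * M t (p.1, u) + δ := by
    intro t i p u
    exact aux_fstab _ _ hδ (hstable _ _ (hnbr t i p)) (hgmeas' t u)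
      (fun qt => hg0 t qt u) (fun qt => hg1 t qt u)
  -- the swap map is measure preserving
  have hswap : ∀ (t : Fin (Tk+1)) (i : Fin (nk+1)),
      MeasurePreserving
        (fun p : (Fin (Tk+1) → Fin (nk+1) → X) × X =>
          (Function.update p.1 t (Function.update (p.1 t) i p.2), p.1 t i)) ρ ρ :=
    fun t i => aux_swap_mp P t i
  -- named quantities
  set A1 : Fin (Tk+1) → ℝ := fun t =>
    ∫ x, (∫ qt, (if qt.2 = t then (∫ z, eval qt.1 z ∂P) else 0 : ℝ) ∂(W x)) ∂μ with hA1def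
  set D : Fin (Tk+1) → Fin (nk+1) → ℝ := fun t i => ∫ x, M t (x, x t i) ∂μ with hDdef
  have hNmeas : ∀ (t : Fin (Tk+1)) (i : Fin (nk+1)),
      Measurable fun x : Fin (Tk+1) → Fin (nk+1) → X => M t (x, x t i) := fun t i =>
    (hMmeas t).comp (measurable_id.prodMk
      ((measurable_pi_apply i).comp (measurable_pi_apply t)))
  have hNint2 : ∀ (t : Fin (Tk+1)) (i : Fin (nk+1)),
      Integrable (fun p : (Fin (Tk+1) → Fin (nk+1) → X) × X => M t (p.1, p.1 t i)) ρ := by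
    intro t i
    exact aux_integrable01 (((hNmeas t i).comp measurable_fst).aestronglyMeasurable)
      (fun p => hM0 t _) (fun p => hM1 t _)
  -- F1 : the ρ-integral of M t equals A1 t
  have hF1 : ∀ t : Fin (Tk+1), ∫ p, M t p ∂ρ = A1 t := by
    intro t
    rw [hρdef, integral_prod _ (hMint t), hA1def]
    refine integral_congr_ae (Filter.Eventually.of_forall fun x => ?_)
    haveI := hWprob x
    have hswapint : Integrable
        (Function.uncurry fun (z : X) (qt : Q × Fin (Tk+1)) =>
          (if qt.2 = t then eval qt.1 z else 0 : ℝ)) (P.prod (W x)) := by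
      refine aux_integrable01 (Measurable.aestronglyMeasurable ?_)
        (fun r => hg0 t r.2 r.1) (fun r => hg1 t r.2 r.1)
      exact Measurable.ite (measurable_snd.snd (measurableSet_singleton t))
        (hmeas.comp (measurable_snd.fst.prodMk measurable_fst)) measurable_const
    calc ∫ z, M t (x, z) ∂P
        = ∫ z, ∫ qt, (if qt.2 = t then eval qt.1 z else 0 : ℝ) ∂(W x) ∂P := rfl
      _ = ∫ qt, ∫ z, (if qt.2 = t then eval qt.1 z else 0 : ℝ) ∂P ∂(W x) :=
          integral_integral_swap hswapint
      _ = ∫ qt, (if qt.2 = t then (∫ z, eval qt.1 z ∂P) else 0 : ℝ) ∂(W x) := by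
          refine integral_congr_ae (Filter.Eventually.of_forall fun qt => ?_)
          by_cases h : qt.2 = t <;> simp [h]
  -- F2 : the ρ-integral of the diagonal evaluation equals D t i
  have hF2 : ∀ (t : Fin (Tk+1)) (i : Fin (nk+1)),
      ∫ p, M t (p.1, p.1 t i) ∂ρ = D t i := by
    intro t i
    rw [hρdef, integral_prod _ (hNint2 t i), hDdef]
    refine integral_congr_ae (Filter.Eventually.of_forall fun x => ?_)
    simp
  -- key inequality 1 : A1 t ≤ exp ε * D t i + δ
  have hkey1 : ∀ (t : Fin (Tk+1)) (i : Fin (nk+1)), A1 t ≤ Real.exp ε * D t i + δ := by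
    intro t i
    have hcomp : ∫ p, M t
        (Function.update p.1 t (Function.update (p.1 t) i p.2), p.1 t i) ∂ρ = ∫ p, M t p ∂ρ :=
      aux_comp_integral_eq (hswap t i) (hMmeas t).aestronglyMeasurable
    have hintL : Integrable (fun p : (Fin (Tk+1) → Fin (nk+1) → X) × X =>
        M t (Function.update p.1 t (Function.update (p.1 t) i p.2), p.1 t i)) ρ :=
      aux_integrable01 (((hMmeas t).comp (hswap t i).measurable).aestronglyMeasurable)
        (fun p => hM0 t _) (fun p => hM1 t _)
    calc A1 t = ∫ p, M t p ∂ρ := (hF1 t).symm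
      _ = ∫ p, M t (Function.update p.1 t (Function.update (p.1 t) i p.2), p.1 t i) ∂ρ :=
          hcomp.symm
      _ ≤ ∫ p : (Fin (Tk+1) → Fin (nk+1) → X) × X,
            (Real.exp ε * M t (p.1, p.1 t i) + δ) ∂ρ := by
          refine integral_mono hintL (((hNint2 t i).const_mul _).add (integrable_const δ)) ?_
          intro p
          exact hstab1 t i p (p.1 t i)
      _ = Real.exp ε * D t i + δ := by
          rw [integral_add ((hNint2 t i).const_mul _) (integrable_const δ),
            integral_const_mul, hF2 t i, integral_const]
          simp
  -- key inequality 2 : D t i ≤ exp ε * A1 t + δ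
  have hkey2 : ∀ (t : Fin (Tk+1)) (i : Fin (nk+1)), D t i ≤ Real.exp ε * A1 t + δ := by
    intro t i
    have hM2meas : Measurable (fun p : (Fin (Tk+1) → Fin (nk+1) → X) × X =>
        M t (Function.update p.1 t (Function.update (p.1 t) i p.2), p.2)) :=
      (hMmeas t).comp ((hupd t i).prodMk measurable_snd)
    have hcomp : ∫ p, (fun q : (Fin (Tk+1) → Fin (nk+1) → X) × X =>
          M t (Function.update q.1 t (Function.update (q.1 t) i q.2), q.2))
          ((fun p : (Fin (Tk+1) → Fin (nk+1) → X) × X =>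
            (Function.update p.1 t (Function.update (p.1 t) i p.2), p.1 t i)) p) ∂ρ
        = ∫ p, M t (Function.update p.1 t (Function.update (p.1 t) i p.2), p.2) ∂ρ :=
      aux_comp_integral_eq (hswap t i) hM2meas.aestronglyMeasurable
    have hid : ∀ p : (Fin (Tk+1) → Fin (nk+1) → X) × X,
        Function.update (Function.update p.1 t (Function.update (p.1 t) i p.2)) t
          (Function.update ((Function.update p.1 t (Function.update (p.1 t) i p.2)) t) i
            (p.1 t i)) = p.1 := by
      intro p
      rw [Function.update_self, Function.update_idem, Function.update_idem,
        Function.update_eq_self, Function.update_eq_self]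
    have hdiag : ∀ p : (Fin (Tk+1) → Fin (nk+1) → X) × X,
        (fun q : (Fin (Tk+1) → Fin (nk+1) → X) × X =>
          M t (Function.update q.1 t (Function.update (q.1 t) i q.2), q.2))
          ((fun p : (Fin (Tk+1) → Fin (nk+1) → X) × X =>
            (Function.update p.1 t (Function.update (p.1 t) i p.2), p.1 t i)) p)
        = M t (p.1, p.1 t i) := by
      intro p
      simp only []
      rw [hid p]
    calc D t i = ∫ p, M t (p.1, p.1 t i) ∂ρ := (hF2 t i).symm
      _ = ∫ p, M t (Function.update p.1 t (Function.update (p.1 t) i p.2), p.2) ∂ρ := by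
          rw [← hcomp]
          exact integral_congr_ae (Filter.Eventually.of_forall fun p => (hdiag p).symm)
      _ ≤ ∫ p : (Fin (Tk+1) → Fin (nk+1) → X) × X, (Real.exp ε * M t p + δ) ∂ρ := by
          refine integral_mono
            (aux_integrable01 hM2meas.aestronglyMeasurable (fun p => hM0 t _) (fun p => hM1 t _))
            (((hMint t).const_mul _).add (integrable_const δ)) ?_
          intro p
          exact hstab1 t i p p.2
      _ = Real.exp ε * A1 t + δ := by
          rw [integral_add ((hMint t).const_mul _) (integrable_const δ),
            integral_const_mul, hF1 t, integral_const]
          simp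
  -- kernel-integral measurability helper
  have hker : ∀ {F : Q × Fin (Tk+1) → ℝ}, Measurable F →
      Measurable fun x : Fin (Tk+1) → Fin (nk+1) → X => ∫ qt, F qt ∂(W x) := by
    intro F hF
    have := ((hF.comp measurable_snd).stronglyMeasurable).integral_kernel_prod_right' (κ := κ)
    simpa [hκdef] using this.measurable
  -- the integrand defining A1 sums up to the true-value integrand
  have hsumc : ∀ qt : Q × Fin (Tk+1),
      ∑ t : Fin (Tk+1), (if qt.2 = t then (∫ z, eval qt.1 z ∂P) else 0 : ℝ)
        = ∫ z, eval qt.1 z ∂P := by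
    intro qt
    rw [Finset.sum_ite_eq]
    simp
  have hsume : ∀ (x : Fin (Tk+1) → Fin (nk+1) → X) (i : Fin (nk+1)) (qt : Q × Fin (Tk+1)),
      ∑ t : Fin (Tk+1), (if qt.2 = t then eval qt.1 (x t i) else 0 : ℝ)
        = eval qt.1 (x qt.2 i) := by
    intro x i qt
    rw [Finset.sum_ite_eq]
    simp
  have hcitemeas : ∀ t : Fin (Tk+1), Measurable fun qt : Q × Fin (Tk+1) =>
      (if qt.2 = t then (∫ z, eval qt.1 z ∂P) else 0 : ℝ) := fun t =>
    Measurable.ite (measurable_snd (measurableSet_singleton t)) (hcmeas.comp measurable_fst)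
      measurable_const
  have hciteint : ∀ (x) (t : Fin (Tk+1)), Integrable (fun qt : Q × Fin (Tk+1) =>
      (if qt.2 = t then (∫ z, eval qt.1 z ∂P) else 0 : ℝ)) (W x) := by
    intro x t
    refine hWint x (hcitemeas t) (fun qt => ?_) (fun qt => ?_)
    · split
      · exact hc0 _
      · exact le_refl 0
    · split
      · exact hc1 _
      · exact zero_le_one
  -- A : the first goal integral equals the sum of the A1 t
  have hA : (∫ x, ∫ qt : Q × Fin (Tk+1), (∫ z, eval qt.1 z ∂P) ∂(W x) ∂μ)
      = ∑ t : Fin (Tk+1), A1 t := by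
    calc (∫ x, ∫ qt : Q × Fin (Tk+1), (∫ z, eval qt.1 z ∂P) ∂(W x) ∂μ)
        = ∫ x, (∑ t : Fin (Tk+1),
            ∫ qt, (if qt.2 = t then (∫ z, eval qt.1 z ∂P) else 0 : ℝ) ∂(W x)) ∂μ := by
          refine integral_congr_ae (Filter.Eventually.of_forall fun x => ?_)
          refine Eq.trans ?_ (integral_finset_sum _ (fun t _ => hciteint x t))
          refine integral_congr_ae (Filter.Eventually.of_forall fun qt => ?_)
          exact (hsumc qt).symm
      _ = ∑ t : Fin (Tk+1), A1 t := by
          refine integral_finset_sum _ (fun t _ => ?_)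
          refine aux_integrable01 ((hker (hcitemeas t)).aestronglyMeasurable)
            (fun x => integral_nonneg fun qt => ?_) (fun x => aux_integral_le_one
              (hciteint x t) fun qt => ?_)
          · split
            · exact hc0 _
            · exact le_refl 0
          · split
            · exact hc1 _
            · exact zero_le_one
  -- integrability facts for the B side
  have hgint : ∀ (x : Fin (Tk+1) → Fin (nk+1) → X) (t : Fin (Tk+1)) (u : X),
      Integrable (fun qt : Q × Fin (Tk+1) => (if qt.2 = t then eval qt.1 u else 0 : ℝ)) (W x) :=
    fun x t u => hWint x (hgmeas' t u) (fun qt => hg0 t qt u) (fun qt => hg1 t qt u)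
  have hMx : ∀ (x : Fin (Tk+1) → Fin (nk+1) → X) (i : Fin (nk+1)),
      Integrable (fun qt : Q × Fin (Tk+1) =>
        ∑ t : Fin (Tk+1), (if qt.2 = t then eval qt.1 (x t i) else 0 : ℝ)) (W x) :=
    fun x i => integrable_finset_sum _ (fun t _ => hgint x t (x t i))
  have hNint1 : ∀ (t : Fin (Tk+1)) (i : Fin (nk+1)),
      Integrable (fun x : Fin (Tk+1) → Fin (nk+1) → X => M t (x, x t i)) μ := fun t i =>
    aux_integrable01 (hNmeas t i).aestronglyMeasurable (fun x => hM0 t _) (fun x => hM1 t _)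
  -- B : the second goal integral
  have hinner : ∀ x : Fin (Tk+1) → Fin (nk+1) → X,
      ∫ qt : Q × Fin (Tk+1), (((nk+1 : ℕ) : ℝ)⁻¹ * ∑ i : Fin (nk+1), eval qt.1 (x qt.2 i)) ∂(W x)
        = ((nk+1 : ℕ) : ℝ)⁻¹ * ∑ i : Fin (nk+1), ∑ t : Fin (Tk+1), M t (x, x t i) := by
    intro x
    rw [integral_const_mul]
    congr 1
    calc ∫ qt : Q × Fin (Tk+1), (∑ i : Fin (nk+1), eval qt.1 (x qt.2 i)) ∂(W x)
        = ∫ qt : Q × Fin (Tk+1), (∑ i : Fin (nk+1), ∑ t : Fin (Tk+1),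
            (if qt.2 = t then eval qt.1 (x t i) else 0 : ℝ)) ∂(W x) := by
          refine integral_congr_ae (Filter.Eventually.of_forall fun qt => ?_)
          exact Finset.sum_congr rfl fun i _ => (hsume x i qt).symm
      _ = ∑ i : Fin (nk+1), ∫ qt : Q × Fin (Tk+1), (∑ t : Fin (Tk+1),
            (if qt.2 = t then eval qt.1 (x t i) else 0 : ℝ)) ∂(W x) :=
          integral_finset_sum _ (fun i _ => hMx x i)
      _ = ∑ i : Fin (nk+1), ∑ t : Fin (Tk+1), M t (x, x t i) :=
          Finset.sum_congr rfl fun i _ => integral_finset_sum _ (fun t _ => hgint x t (x t i))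
  have hB : (∫ x, ∫ qt : Q × Fin (Tk+1),
        (((nk+1 : ℕ) : ℝ)⁻¹ * ∑ i : Fin (nk+1), eval qt.1 (x qt.2 i)) ∂(W x) ∂μ)
      = ((nk+1 : ℕ) : ℝ)⁻¹ * ∑ i : Fin (nk+1), ∑ t : Fin (Tk+1), D t i := by
    calc (∫ x, ∫ qt : Q × Fin (Tk+1),
          (((nk+1 : ℕ) : ℝ)⁻¹ * ∑ i : Fin (nk+1), eval qt.1 (x qt.2 i)) ∂(W x) ∂μ)
        = ∫ x, (((nk+1 : ℕ) : ℝ)⁻¹ * ∑ i : Fin (nk+1), ∑ t : Fin (Tk+1), M t (x, x t i)) ∂μ :=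
          integral_congr_ae (Filter.Eventually.of_forall hinner)
      _ = ((nk+1 : ℕ) : ℝ)⁻¹ * ∫ x, (∑ i : Fin (nk+1), ∑ t : Fin (Tk+1), M t (x, x t i)) ∂μ :=
          integral_const_mul _ _
      _ = ((nk+1 : ℕ) : ℝ)⁻¹ * ∑ i : Fin (nk+1), ∑ t : Fin (Tk+1), D t i := by
          congr 1
          rw [integral_finset_sum _ (fun i _ => integrable_finset_sum _ fun t _ => hNint1 t i)]
          exact Finset.sum_congr rfl fun i _ =>
            integral_finset_sum _ (fun t _ => hNint1 t i)
  -- bounds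
  have hA1nn : ∀ t, 0 ≤ A1 t := fun t => by rw [← hF1 t]; exact integral_nonneg (hM0 t)
  have hDnn : ∀ t i, 0 ≤ D t i := fun t i => by
    rw [← hF2 t i]; exact integral_nonneg fun p => hM0 t _
  have hAle1 : ∑ t : Fin (Tk+1), A1 t ≤ 1 := by
    rw [← hA]
    refine aux_integral_le_one (aux_integrable01 ((hker (hcmeas.comp measurable_fst)).aestronglyMeasurable)
      (fun x => integral_nonneg fun qt => hc0 _)
      (fun x => aux_integral_le_one (hWint x (hcmeas.comp measurable_fst)
        (fun qt => hc0 _) (fun qt => hc1 _)) (fun qt => hc1 _))) ?_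
    intro x
    exact aux_integral_le_one (hWint x (hcmeas.comp measurable_fst)
      (fun qt => hc0 _) (fun qt => hc1 _)) (fun qt => hc1 _)
  have hBle1 : ∀ i : Fin (nk+1), ∑ t : Fin (Tk+1), D t i ≤ 1 := by
    intro i
    rw [show (∑ t : Fin (Tk+1), D t i)
        = ∫ x, (∑ t : Fin (Tk+1), M t (x, x t i)) ∂μ from
      (integral_finset_sum _ fun t _ => hNint1 t i).symm]
    refine aux_integral_le_one (integrable_finset_sum _ fun t _ => hNint1 t i) fun x => ?_
    rw [show (∑ t : Fin (Tk+1), M t (x, x t i))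
        = ∫ qt : Q × Fin (Tk+1), (∑ t : Fin (Tk+1),
            (if qt.2 = t then eval qt.1 (x t i) else 0 : ℝ)) ∂(W x) from
      (integral_finset_sum _ fun t _ => hgint x t (x t i)).symm]
    refine aux_integral_le_one (hMx x i) fun qt => ?_
    rw [hsume x i qt]
    exact he1 _ _
  -- per-dataset bound
  have hone : (1:ℝ) ≤ Real.exp ε := Real.one_le_exp hε
  have hTd : ∀ i : Fin (nk+1),
      |(∑ t : Fin (Tk+1), A1 t) - ∑ t : Fin (Tk+1), D t i|
        ≤ Real.exp ε - 1 + ((Tk:ℝ)+1) * δ := by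
    intro i
    have hsum1 : ∑ t : Fin (Tk+1), (Real.exp ε * D t i + δ)
        = Real.exp ε * (∑ t : Fin (Tk+1), D t i) + ((Tk:ℝ)+1) * δ := by
      rw [Finset.sum_add_distrib, ← Finset.mul_sum, Finset.sum_const, Finset.card_univ,
        Fintype.card_fin, nsmul_eq_mul]
      push_cast
      ring
    have h1 : ∑ t : Fin (Tk+1), A1 t
        ≤ Real.exp ε * (∑ t : Fin (Tk+1), D t i) + ((Tk:ℝ)+1) * δ := by
      rw [← hsum1]
      exact Finset.sum_le_sum fun t _ => hkey1 t i
    have hsum2 : ∑ t : Fin (Tk+1), (Real.exp ε * A1 t + δ)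
        = Real.exp ε * (∑ t : Fin (Tk+1), A1 t) + ((Tk:ℝ)+1) * δ := by
      rw [Finset.sum_add_distrib, ← Finset.mul_sum, Finset.sum_const, Finset.card_univ,
        Fintype.card_fin, nsmul_eq_mul]
      push_cast
      ring
    have h2 : ∑ t : Fin (Tk+1), D t i
        ≤ Real.exp ε * (∑ t : Fin (Tk+1), A1 t) + ((Tk:ℝ)+1) * δ := by
      rw [← hsum2]
      exact Finset.sum_le_sum fun t _ => hkey2 t i
    have hAnn : 0 ≤ ∑ t : Fin (Tk+1), A1 t := Finset.sum_nonneg fun t _ => hA1nn t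
    have hBnn : 0 ≤ ∑ t : Fin (Tk+1), D t i := Finset.sum_nonneg fun t _ => hDnn t i
    rw [abs_le]
    constructor
    · nlinarith [mul_nonneg (sub_nonneg.mpr hone) (sub_nonneg.mpr hAle1)]
    · nlinarith [mul_nonneg (sub_nonneg.mpr hone) (sub_nonneg.mpr (hBle1 i))]
  -- conclusion
  rw [hA, hB]
  have hne : ((nk+1:ℕ):ℝ) ≠ 0 := by positivity
  have hsplit : (∑ t : Fin (Tk+1), A1 t)
      - ((nk+1:ℕ):ℝ)⁻¹ * ∑ i : Fin (nk+1), ∑ t : Fin (Tk+1), D t i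
      = ((nk+1:ℕ):ℝ)⁻¹ * ∑ i : Fin (nk+1),
          ((∑ t : Fin (Tk+1), A1 t) - ∑ t : Fin (Tk+1), D t i) := by
    rw [Finset.sum_sub_distrib, Finset.sum_const, Finset.card_univ, Fintype.card_fin,
      nsmul_eq_mul, mul_sub, ← mul_assoc]
    push_cast
    field_simp
  rw [hsplit, abs_mul, abs_of_nonneg (by positivity : (0:ℝ) ≤ ((nk+1:ℕ):ℝ)⁻¹)]
  calc ((nk+1:ℕ):ℝ)⁻¹ * |∑ i : Fin (nk+1),
        ((∑ t : Fin (Tk+1), A1 t) - ∑ t : Fin (Tk+1), D t i)|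
      ≤ ((nk+1:ℕ):ℝ)⁻¹ * ∑ i : Fin (nk+1),
        |(∑ t : Fin (Tk+1), A1 t) - ∑ t : Fin (Tk+1), D t i| :=
        mul_le_mul_of_nonneg_left (Finset.abs_sum_le_sum_abs _ _) (by positivity)
    _ ≤ ((nk+1:ℕ):ℝ)⁻¹ * ∑ _i : Fin (nk+1), (Real.exp ε - 1 + ((Tk:ℝ)+1) * δ) :=
        mul_le_mul_of_nonneg_left (Finset.sum_le_sum fun i _ => hTd i) (by positivity)
    _ = Real.exp ε - 1 + ((Tk:ℝ)+1) * δ := by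
        rw [Finset.sum_const, Finset.card_univ, Fintype.card_fin, nsmul_eq_mul, ← mul_assoc]
        push_cast
        field_simp
    _ = Real.exp ε - 1 + (↑Tk+1) * δ := by push_cast; ring


/-- Multi-sample de-correlated expectation lemma for statistical queries:
an (ε,δ)-max-KL stable algorithm taking `T` datasets of `n` i.i.d. samples from `P`
and outputting a statistical query `q` together with an index `t` satisfies
`|E[q(P)] − E[q(S_t)]| ≤ e^ε − 1 + T·δ`. -/
theorem multi_sample_decorrelated_expectation_SQ
    {X Q : Type*} [MeasurableSpace X] [MeasurableSpace Q] {n T : ℕ}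
    (hn : 0 < n) (hT : 0 < T)
    (P : Measure X) [IsProbabilityMeasure P]
    (W : (Fin T → Fin n → X) → Measure (Q × Fin T))
    (hWprob : ∀ x, IsProbabilityMeasure (W x)) (hWmeas : Measurable W)
    (eval : Q → X → ℝ) (hmeas : Measurable fun p : Q × X => eval p.1 p.2)
    (hrange : ∀ q z, eval q z ∈ Set.Icc (0 : ℝ) 1)
    (ε δ : ℝ) (hε : 0 ≤ ε) (hδ : 0 ≤ δ)
    (hstable : ∀ x x' : Fin T → Fin n → X, NeighboringMulti x x' →
      ∀ S : Set (Q × Fin T), MeasurableSet S →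
        ((W x) S).toReal ≤ Real.exp ε * ((W x') S).toReal + δ) :
    |(∫ x, ∫ qt : Q × Fin T, (∫ z, eval qt.1 z ∂P) ∂(W x)
        ∂(Measure.pi fun _ : Fin T => Measure.pi fun _ : Fin n => P)) -
      (∫ x, ∫ qt : Q × Fin T, ((n : ℝ)⁻¹ * ∑ i : Fin n, eval qt.1 (x qt.2 i)) ∂(W x)
        ∂(Measure.pi fun _ : Fin T => Measure.pi fun _ : Fin n => P))|
      ≤ Real.exp ε - 1 + T * δ := by
  obtain ⟨Tk, rfl⟩ : ∃ k, T = k + 1 := ⟨T - 1, (Nat.succ_pred_eq_of_pos hT).symm⟩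
  obtain ⟨nk, rfl⟩ : ∃ k, n = k + 1 := ⟨n - 1, (Nat.succ_pred_eq_of_pos hn).symm⟩
  have h2 := aux_main P W hWprob hWmeas eval hmeas hrange ε δ hε hδ
    (fun x x' h => hstable x x' h)
  refine le_trans h2 (le_of_eq ?_)
  push_cast
  ring
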